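/- For all real s and all α > 0, the pointwise limit as α → ∞ of f_α(s) := (1/(2α))·log(cosh(αs)/cosh(α(1−s))) + 1/2 is f_I(s) := max(min(s,1),0). -/

import Mathlib

open Filter Real

lemma cosh_le_exp_abs (t : ℝ) : Real.cosh t ≤ Real.exp |t| := by
  rw [Real.cosh_eq]
  have h1 : Real.exp t ≤ Real.exp |t| := Real.exp_le_exp.2 (le_abs_self t)
  have h2 : Real.exp (-t) ≤ Real.exp |t| := Real.exp_le_exp.2 (neg_le_abs t)
  linarith

lemma exp_abs_le_two_cosh (t : ℝ) : Real.exp |t| ≤ 2 * Real.cosh t := by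
  rw [Real.cosh_eq]
  rcases abs_cases t with ⟨h, _⟩ | ⟨h, _⟩ <;> rw [h] <;>
    nlinarith [Real.exp_pos t, Real.exp_pos (-t)]

lemma aux_tendsto (x : ℝ) :
    Tendsto (fun α : ℝ => (1 / α) * Real.log (Real.cosh (α * x))) atTop (nhds |x|) := by
  have hlog2 : Tendsto (fun α : ℝ => |x| - Real.log 2 * (1 / α)) atTop (nhds |x|) := by
    have h0 : Tendsto (fun α : ℝ => (1 : ℝ) / α) atTop (nhds 0) := by
      simpa [one_div] using (tendsto_inv_atTop_zero : Tendsto (fun α : ℝ => α⁻¹) atTop (nhds 0))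
    have := (tendsto_const_nhds (x := Real.log 2) (f := atTop)).mul h0
    simpa using (tendsto_const_nhds (x := |x|) (f := atTop)).sub this
  apply tendsto_of_tendsto_of_tendsto_of_le_of_le' hlog2 tendsto_const_nhds
  · filter_upwards [eventually_gt_atTop (0 : ℝ)] with α hα
    have hc : Real.exp |α * x| ≤ 2 * Real.cosh (α * x) := exp_abs_le_two_cosh _
    have hcp : 0 < Real.cosh (α * x) := Real.cosh_pos _
    have := Real.log_le_log (Real.exp_pos _) hc
    rw [Real.log_exp, Real.log_mul (by norm_num) (ne_of_gt hcp)] at this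
    have habs : |α * x| = α * |x| := by rw [abs_mul, abs_of_pos hα]
    rw [habs] at this
    have h1 : α * |x| - Real.log 2 ≤ Real.log (Real.cosh (α * x)) := by linarith
    rw [div_mul_eq_mul_div, one_mul, le_div_iff₀ hα]
    have he : (|x| - Real.log 2 * (1 / α)) * α = α * |x| - Real.log 2 := by
      field_simp
    linarith [he ▸ h1]
  · filter_upwards [eventually_gt_atTop (0 : ℝ)] with α hα
    have hc : Real.cosh (α * x) ≤ Real.exp |α * x| := cosh_le_exp_abs _
    have hcp : 0 < Real.cosh (α * x) := Real.cosh_pos _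
    have := Real.log_le_log hcp hc
    rw [Real.log_exp, abs_mul, abs_of_pos hα] at this
    rw [div_mul_eq_mul_div, one_mul, div_le_iff₀ hα]
    nlinarith

theorem falpha_tendsto_saturated_identity (s : ℝ) :
    Tendsto (fun α : ℝ =>
      (1 / (2 * α)) * Real.log (Real.cosh (α * s) / Real.cosh (α * (1 - s))) + 1 / 2)
      atTop (nhds (max (min s 1) 0)) := by
  have key : Tendsto (fun α : ℝ =>
      (1/2) * ((1 / α) * Real.log (Real.cosh (α * s)))
      - (1/2) * ((1 / α) * Real.log (Real.cosh (α * (1 - s)))) + 1 / 2)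
      atTop (nhds (|s| / 2 - |1 - s| / 2 + 1 / 2)) := by
    have h1 := (aux_tendsto s).const_mul (1/2 : ℝ)
    have h2 := (aux_tendsto (1 - s)).const_mul (1/2 : ℝ)
    convert (h1.sub h2).add (tendsto_const_nhds (x := (1:ℝ)/2) (f := atTop)) using 2 <;> ring
  have heq : (fun α : ℝ =>
      (1 / (2 * α)) * Real.log (Real.cosh (α * s) / Real.cosh (α * (1 - s))) + 1 / 2)
      =ᶠ[atTop] (fun α : ℝ =>
      (1/2) * ((1 / α) * Real.log (Real.cosh (α * s)))
      - (1/2) * ((1 / α) * Real.log (Real.cosh (α * (1 - s)))) + 1 / 2) := by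
    filter_upwards [eventually_gt_atTop (0 : ℝ)] with α hα
    rw [Real.log_div (Real.cosh_pos _).ne' (Real.cosh_pos _).ne']
    field_simp
  have hval : |s| / 2 - |1 - s| / 2 + 1 / 2 = max (min s 1) 0 := by
    rcases le_total s 0 with h | h
    · rw [abs_of_nonpos h, abs_of_nonneg (by linarith), min_eq_left (by linarith),
        max_eq_right h]
      ring
    · rcases le_total s 1 with h1 | h1
      · rw [abs_of_nonneg h, abs_of_nonneg (by linarith), min_eq_left h1, max_eq_left h]
        ring
      · rw [abs_of_nonneg h, abs_of_nonpos (by linarith), min_eq_right h1, max_eq_left zero_le_one]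
        ring
  rw [← hval]
  exact key.congr' heq.symm
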